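/- For integers n, M, m with 0 ≤ m < M ≤ n and M + m ≥ n + 1, there exists a collection of n circular arcs with maximum agreement number M and minimum agreement number m in which every pair of arcs intersects (the intersection graph is complete with C(n,2) edges). -/

import Mathlib

open scoped Classical

/-- The circle is parametrized by the half-open interval `[0,1)`.  `memArc x y p`
says that the point `p` lies on the closed arc going clockwise from `x` to `y`
(wrapping around the circle when `y` precedes `x`). -/
def memArc (x y p : ℝ) : Prop :=
  if x ≤ y then x ≤ p ∧ p ≤ y else x ≤ p ∨ p ≤ y

/-- A circular arc, given by its left endpoint `x` and right endpoint `y`;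
the arc runs clockwise from `x` to `y`. -/
structure Arc where
  x : ℝ
  y : ℝ

/-- Both endpoints of the arc lie on the circle `[0,1)`. -/
def Arc.InCircle (A : Arc) : Prop :=
  A.x ∈ Set.Ico (0 : ℝ) 1 ∧ A.y ∈ Set.Ico (0 : ℝ) 1

/-- The point `p` lies on the arc `A`. -/
def Arc.Mem (A : Arc) (p : ℝ) : Prop := memArc A.x A.y p

/-- Two arcs intersect: some point of the circle lies on both. -/
def Intersects (A B : Arc) : Prop :=
  ∃ p ∈ Set.Ico (0 : ℝ) 1, A.Mem p ∧ B.Mem p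

/-- Two arcs doubly intersect: each arc contains both endpoints of the other. -/
def DoublyIntersects (A B : Arc) : Prop :=
  A.Mem B.x ∧ A.Mem B.y ∧ B.Mem A.x ∧ B.Mem A.y

/-- The agreement number of a point `p`: the number of arcs of the family containing it. -/
noncomputable def agree {n : ℕ} (A : Fin n → Arc) (p : ℝ) : ℕ :=
  (Finset.univ.filter fun i => (A i).Mem p).card

/-- `M` is the maximum agreement number of the family. -/
def IsMaxAgreement {n : ℕ} (A : Fin n → Arc) (M : ℕ) : Prop :=
  (∀ p ∈ Set.Ico (0 : ℝ) 1, agree A p ≤ M) ∧ ∃ p ∈ Set.Ico (0 : ℝ) 1, agree A p = M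

/-- `m` is the minimum agreement number of the family. -/
def IsMinAgreement {n : ℕ} (A : Fin n → Arc) (m : ℕ) : Prop :=
  (∀ p ∈ Set.Ico (0 : ℝ) 1, m ≤ agree A p) ∧ ∃ p ∈ Set.Ico (0 : ℝ) 1, agree A p = m

/-- All `2n` endpoints of the family are pairwise distinct. -/
def DistinctEndpoints {n : ℕ} (A : Fin n → Arc) : Prop :=
  Function.Injective fun q : Fin n × Bool => if q.2 then (A q.1).x else (A q.1).y

/-- Number of intersecting (unordered) pairs of arcs: the edge count of the
intersection graph. -/
noncomputable def edgeCount {n : ℕ} (A : Fin n → Arc) : ℕ :=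
  (Finset.univ.filter fun q : Fin n × Fin n =>
    q.1 < q.2 ∧ Intersects (A q.1) (A q.2)).card

/-- Number of doubly intersecting (unordered) pairs of arcs. -/
noncomputable def doubleCount {n : ℕ} (A : Fin n → Arc) : ℕ :=
  (Finset.univ.filter fun q : Fin n × Fin n =>
    q.1 < q.2 ∧ DoublyIntersects (A q.1) (A q.2)).card

/-- The running count at the point `q`: the number of arcs covering points
immediately clockwise of `q` (for an endpoint `q` of the family, an arc covers
points just clockwise of `q` iff `q` lies on the arc and `q` is not its right
endpoint, since all endpoints are distinct). -/
noncomputable def countAfter {n : ℕ} (A : Fin n → Arc) (q : ℝ) : ℕ :=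
  (Finset.univ.filter fun i => (A i).Mem q ∧ q ≠ (A i).y).card

/-- The running count sum: the sum of the running counts over all `2n` endpoints. -/
noncomputable def runningCountSum {n : ℕ} (A : Fin n → Arc) : ℕ :=
  ∑ i : Fin n, (countAfter A (A i).x + countAfter A (A i).y)

namespace ArcAux


def xsl (b c d i : ℕ) : ℕ :=
  if i < b then 2*c+2*i+2
  else if i < b+c then 2*(i-b)+2
  else if i < b+2*c then 2*(b+c)+2*d+2*(i-(b+c))+2
  else 2*(b+c)+d+(i-(b+2*c))+1

def ysl (b c d i : ℕ) : ℕ :=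
  if i < b then 2*i+1
  else if i < b+c then 2*(b+c)+2*d+2*(i-b)+1
  else if i < b+2*c then 2*(i-c)+1
  else 2*(b+c)+(i-(b+2*c))+1

variable {b c d i j : ℕ}

lemma xsl_pos (h : i < b+2*c+d) : 1 ≤ xsl b c d i := by
  unfold xsl; split_ifs <;> omega

lemma xsl_le (h : i < b+2*c+d) : xsl b c d i ≤ 2*(b+2*c+d) := by
  unfold xsl; split_ifs <;> omega

lemma ysl_pos (h : i < b+2*c+d) : 1 ≤ ysl b c d i := by
  unfold ysl; split_ifs <;> omega

lemma ysl_le (h : i < b+2*c+d) : ysl b c d i ≤ 2*(b+2*c+d) := by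
  unfold ysl; split_ifs <;> omega

noncomputable def RR (b c d : ℕ) : ℝ := ((2*(b+2*c+d)+1 : ℕ) : ℝ)

lemma RR_pos : 0 < RR b c d := by
  unfold RR; exact_mod_cast Nat.succ_pos _

noncomputable def arcs (b c d : ℕ) : Fin (b+2*c+d) → Arc :=
  fun i => ⟨(xsl b c d i : ℝ) / RR b c d, (ysl b c d i : ℝ) / RR b c d⟩

lemma div_le_div_slots (k l : ℕ) :
    (k : ℝ) / RR b c d ≤ (l : ℝ) / RR b c d ↔ k ≤ l := by
  rw [div_le_div_iff₀ RR_pos RR_pos, mul_le_mul_iff_of_pos_right RR_pos, Nat.cast_le]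

lemma div_lt_div_slots (k l : ℕ) :
    (k : ℝ) / RR b c d < (l : ℝ) / RR b c d ↔ k < l := by
  rw [div_lt_div_iff₀ RR_pos RR_pos, mul_lt_mul_iff_of_pos_right RR_pos, Nat.cast_lt]

lemma div_eq_div_slots (k l : ℕ) :
    (k : ℝ) / RR b c d = (l : ℝ) / RR b c d ↔ k = l := by
  constructor
  · intro h
    exact le_antisymm ((div_le_div_slots k l).1 h.le) ((div_le_div_slots l k).1 h.ge)
  · rintro rfl; rfl

lemma arcs_inCircle (i : Fin (b+2*c+d)) : (arcs b c d i).InCircle := by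
  have h1 : ∀ k : ℕ, k ≤ 2*(b+2*c+d) → (k : ℝ) / RR b c d ∈ Set.Ico (0:ℝ) 1 := by
    intro k hk
    constructor
    · exact div_nonneg (Nat.cast_nonneg _) RR_pos.le
    · rw [div_lt_one RR_pos]
      unfold RR
      exact_mod_cast Nat.lt_succ_of_le hk
  exact ⟨h1 _ (xsl_le i.isLt), h1 _ (ysl_le i.isLt)⟩


lemma xsl_inj (hb : 1 ≤ b) (hi : i < b+2*c+d) (hj : j < b+2*c+d)
    (h : xsl b c d i = xsl b c d j) : i = j := by
  unfold xsl at h; split_ifs at h <;> omega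

lemma ysl_inj (hb : 1 ≤ b) (hi : i < b+2*c+d) (hj : j < b+2*c+d)
    (h : ysl b c d i = ysl b c d j) : i = j := by
  unfold ysl at h; split_ifs at h <;> omega

lemma xsl_ne_ysl (hi : i < b+2*c+d) (hj : j < b+2*c+d) :
    xsl b c d i ≠ ysl b c d j := by
  unfold xsl ysl; split_ifs <;> omega

lemma indicator_eq (A : Arc) (p : ℝ) :
    ((if A.Mem p then 1 else 0) : ℕ) + (if A.x ≤ A.y then 1 else 0)
      = (if A.x ≤ p then 1 else 0) + (if p ≤ A.y then 1 else 0) := by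
  unfold Arc.Mem memArc
  rcases le_or_gt A.x A.y with h | h
  · rw [if_pos h, if_pos h]
    by_cases h1 : A.x ≤ p <;> by_cases h2 : p ≤ A.y <;>
      simp [h1, h2] <;> linarith
  · rw [if_neg (not_le.2 h), if_neg (not_le.2 h)]
    by_cases h1 : A.x ≤ p <;> by_cases h2 : p ≤ A.y <;>
      simp [h1, h2] <;> linarith

lemma card_filter_interval (n a e : ℕ) (he : e ≤ n) :
    (Finset.univ.filter fun i : Fin n => a ≤ (i : ℕ) ∧ (i : ℕ) < e).card = e - a := by
  have himg : (Finset.univ.filter fun i : Fin n => a ≤ (i : ℕ) ∧ (i : ℕ) < e).image Fin.val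
      = Finset.Ico a e := by
    ext k
    simp only [Finset.mem_image, Finset.mem_filter, Finset.mem_univ, true_and, Finset.mem_Ico]
    constructor
    · rintro ⟨i, hi, rfl⟩; exact hi
    · rintro ⟨h1, h2⟩; exact ⟨⟨k, lt_of_lt_of_le h2 he⟩, ⟨h1, h2⟩, rfl⟩
  rw [← Nat.card_Ico a e, ← himg, Finset.card_image_of_injective _ Fin.val_injective]

lemma normal_iff (hb : 1 ≤ b) (hd : 1 ≤ d) (hi : i < b+2*c+d) :
    xsl b c d i ≤ ysl b c d i ↔ (b ≤ i ∧ i < b+c) := by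
  unfold xsl ysl; split_ifs <;> omega

lemma key (hb : 1 ≤ b) (hd : 1 ≤ d) (p : ℝ) :
    agree (arcs b c d) p + c =
      (Finset.univ.filter fun i : Fin (b+2*c+d) => ((xsl b c d i : ℝ) / RR b c d) ≤ p).card
    + (Finset.univ.filter fun i : Fin (b+2*c+d) => p ≤ ((ysl b c d i : ℝ) / RR b c d)).card := by
  classical
  have hc : (Finset.univ.filter fun i : Fin (b+2*c+d) =>
      (arcs b c d i).x ≤ (arcs b c d i).y).card = c := by
    have heq : (Finset.univ.filter fun i : Fin (b+2*c+d) =>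
        (arcs b c d i).x ≤ (arcs b c d i).y)
        = (Finset.univ.filter fun i : Fin (b+2*c+d) => b ≤ (i:ℕ) ∧ (i:ℕ) < b+c) := by
      apply Finset.filter_congr
      intro i _
      show ((xsl b c d i : ℝ) / RR b c d ≤ (ysl b c d i : ℝ) / RR b c d) ↔ _
      rw [div_le_div_slots, normal_iff hb hd i.isLt]
    rw [heq, card_filter_interval _ _ _ (by omega)]
    omega
  have h2 : agree (arcs b c d) p + (Finset.univ.filter fun i : Fin (b+2*c+d) =>
      (arcs b c d i).x ≤ (arcs b c d i).y).card =
      (Finset.univ.filter fun i : Fin (b+2*c+d) => ((xsl b c d i : ℝ) / RR b c d) ≤ p).card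
    + (Finset.univ.filter fun i : Fin (b+2*c+d) => p ≤ ((ysl b c d i : ℝ) / RR b c d)).card := by
    unfold agree
    rw [Finset.card_filter, Finset.card_filter, Finset.card_filter, Finset.card_filter,
      ← Finset.sum_add_distrib, ← Finset.sum_add_distrib]
    exact Finset.sum_congr rfl fun i _ => indicator_eq (arcs b c d i) p
  rw [hc] at h2
  exact h2

def sig (b c d i : ℕ) : ℕ :=
  if i < b then (if c+i+1 ≤ b then c+i else 2*c+i)
  else if i < b+c then (if i-b+1 ≤ b then i-b else c+i-b)
  else if i < b+2*c then i-c
  else i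

def tau (b c d i : ℕ) : ℕ :=
  if i < b then (if i ≤ c then b+i-1 else i-c-1)
  else if i < b+c then (if i = b then b+2*c+d-1 else c+i-1)
  else if i < b+2*c then (if i-c ≤ c then b+i-c-1 else i-2*c-1)
  else b-1

lemma sig_lt (hb : 1 ≤ b) (hi : i < b+2*c+d) : sig b c d i < b+2*c+d := by
  unfold sig; split_ifs <;> omega

lemma ysl_sig_lt_xsl (hb : 1 ≤ b) (hi : i < b+2*c+d) :
    ysl b c d (sig b c d i) < xsl b c d i := by
  unfold sig xsl ysl; split_ifs <;> omega

lemma sig_inj (hb : 1 ≤ b) (hi : i < b+2*c+d) (hj : j < b+2*c+d)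
    (h : sig b c d i = sig b c d j) : i = j := by
  unfold sig at h; split_ifs at h <;> omega

def notExc (b c d i : ℕ) : Prop := ¬ (i = 0 ∨ (b+2*c ≤ i ∧ i < b+2*c+d-1))

lemma tau_lt (hb : 1 ≤ b) (hd : 1 ≤ d) (hi : i < b+2*c+d) (he : notExc b c d i) :
    tau b c d i < b+2*c+d := by
  unfold notExc at he; unfold tau; split_ifs <;> omega

lemma xsl_tau_lt_ysl (hb : 1 ≤ b) (hd : 1 ≤ d) (hi : i < b+2*c+d) (he : notExc b c d i) :
    xsl b c d (tau b c d i) < ysl b c d i := by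
  unfold notExc at he; unfold tau xsl ysl; split_ifs <;> omega

lemma tau_inj (hb : 1 ≤ b) (hd : 1 ≤ d) (hi : i < b+2*c+d) (hj : j < b+2*c+d)
    (hei : notExc b c d i) (hej : notExc b c d j)
    (h : tau b c d i = tau b c d j) : i = j := by
  unfold notExc at hei hej; unfold tau at h; split_ifs at h <;> omega

lemma bound_upper (hb : 1 ≤ b) (hd : 1 ≤ d) (p : ℝ) :
    (Finset.univ.filter fun i : Fin (b+2*c+d) => ((xsl b c d i : ℝ) / RR b c d) ≤ p).card
    + (Finset.univ.filter fun i : Fin (b+2*c+d) => p ≤ ((ysl b c d i : ℝ) / RR b c d)).card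
    ≤ b+2*c+d := by
  classical
  have hsplit := Finset.card_filter_add_card_filter_not
    (s := (Finset.univ : Finset (Fin (b+2*c+d))))
    (p := fun i => p ≤ ((ysl b c d i : ℝ) / RR b c d))
  have hX : (Finset.univ.filter fun i : Fin (b+2*c+d) =>
      ((xsl b c d i : ℝ) / RR b c d) ≤ p).card ≤
      (Finset.univ.filter fun i : Fin (b+2*c+d) =>
      ¬ (p ≤ ((ysl b c d i : ℝ) / RR b c d))).card := by
    apply Finset.card_le_card_of_injOn (fun i => ⟨sig b c d i, sig_lt hb i.isLt⟩)
    · intro i hi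
      simp only [Finset.mem_coe, Finset.mem_filter, Finset.mem_univ, true_and, not_le] at hi ⊢
      calc ((ysl b c d (sig b c d (i:ℕ)) : ℝ) / RR b c d)
          < (xsl b c d (i:ℕ) : ℝ) / RR b c d :=
            (div_lt_div_slots _ _).2 (ysl_sig_lt_xsl hb i.isLt)
        _ ≤ p := hi
    · intro i _ j _ h
      have : sig b c d (i:ℕ) = sig b c d (j:ℕ) := congrArg Fin.val h
      exact Fin.ext (sig_inj hb i.isLt j.isLt this)
  have huniv : (Finset.univ : Finset (Fin (b+2*c+d))).card = b+2*c+d := by simp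
  omega

lemma bound_lower (hb : 1 ≤ b) (hd : 1 ≤ d) (p : ℝ) :
    b+2*c+d ≤
    (Finset.univ.filter fun i : Fin (b+2*c+d) => ((xsl b c d i : ℝ) / RR b c d) ≤ p).card
    + (Finset.univ.filter fun i : Fin (b+2*c+d) => p ≤ ((ysl b c d i : ℝ) / RR b c d)).card
    + d := by
  classical
  have hsplit := Finset.card_filter_add_card_filter_not
    (s := (Finset.univ : Finset (Fin (b+2*c+d))))
    (p := fun i => p ≤ ((ysl b c d i : ℝ) / RR b c d))
  set S := Finset.univ.filter fun i : Fin (b+2*c+d) =>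
      ¬ (p ≤ ((ysl b c d i : ℝ) / RR b c d)) with hS
  set E := Finset.univ.filter fun i : Fin (b+2*c+d) =>
      ¬ notExc b c d (i : ℕ) with hE
  have hcardE : E.card ≤ d := by
    have hsub : E ⊆ {(⟨0, by omega⟩ : Fin (b+2*c+d))} ∪
        (Finset.univ.filter fun i : Fin (b+2*c+d) => b+2*c ≤ (i:ℕ) ∧ (i:ℕ) < b+2*c+(d-1)) := by
      intro i hi
      rw [hE, Finset.mem_filter] at hi
      unfold notExc at hi
      rw [Finset.mem_union, Finset.mem_singleton, Finset.mem_filter]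
      rcases not_not.1 hi.2 with h0 | hint
      · left; exact Fin.ext h0
      · right; exact ⟨Finset.mem_univ _, hint.1, by omega⟩
    calc E.card ≤ _ := Finset.card_le_card hsub
      _ ≤ 1 + (Finset.univ.filter fun i : Fin (b+2*c+d) =>
            b+2*c ≤ (i:ℕ) ∧ (i:ℕ) < b+2*c+(d-1)).card := by
          refine le_trans (Finset.card_union_le _ _) ?_
          simp
      _ ≤ d := by rw [card_filter_interval _ _ _ (by omega)]; omega
  have hSE : (S \ E).card ≤
      (Finset.univ.filter fun i : Fin (b+2*c+d) => ((xsl b c d i : ℝ) / RR b c d) ≤ p).card := by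
    have hmap : ∀ i ∈ S \ E, notExc b c d (i : ℕ) := by
      intro i hi
      rw [Finset.mem_sdiff, hE, Finset.mem_filter] at hi
      have := hi.2
      by_contra hcon
      exact this (Finset.mem_filter.2 ⟨Finset.mem_univ _, hcon⟩)
    apply Finset.card_le_card_of_injOn
      (fun i => if h : (i : Fin (b+2*c+d)) ∈ S \ E then
        (⟨tau b c d i, tau_lt hb hd i.isLt (hmap i h)⟩ : Fin (b+2*c+d)) else i)
    · intro i hi
      simp only [Finset.mem_coe] at hi ⊢
      rw [dif_pos hi]
      have hiS : ¬ (p ≤ ((ysl b c d (i:ℕ) : ℝ) / RR b c d)) := by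
        have := (Finset.mem_sdiff.1 hi).1
        rw [hS, Finset.mem_filter] at this
        exact this.2
      simp only [Finset.mem_filter, Finset.mem_univ, true_and]
      calc ((xsl b c d (tau b c d (i:ℕ)) : ℝ) / RR b c d)
          ≤ (ysl b c d (i:ℕ) : ℝ) / RR b c d :=
            ((div_lt_div_slots _ _).2 (xsl_tau_lt_ysl hb hd i.isLt (hmap i hi))).le
        _ ≤ p := (not_le.1 hiS).le
    · intro i hi j hj h
      have hi' := Finset.mem_coe.1 hi
      have hj' := Finset.mem_coe.1 hj
      simp only [dif_pos hi', dif_pos hj'] at h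
      have : tau b c d (i:ℕ) = tau b c d (j:ℕ) := congrArg Fin.val h
      exact Fin.ext (tau_inj hb hd i.isLt j.isLt (hmap i hi') (hmap j hj') this)
  have h1 : S.card ≤ (S \ E).card + E.card := Finset.card_le_card_sdiff_add_card
  have huniv : (Finset.univ : Finset (Fin (b+2*c+d))).card = b+2*c+d := by simp
  omega

lemma cast_div_le_iff {T : ℝ} (hT : 0 < T) (k l : ℕ) :
    (k : ℝ) / T ≤ (l : ℝ) / T ↔ k ≤ l := by
  rw [div_le_div_iff₀ hT hT, mul_le_mul_iff_of_pos_right hT, Nat.cast_le]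

lemma agree_zero (hb : 1 ≤ b) (hd : 1 ≤ d) :
    agree (arcs b c d) 0 = b+c+d := by
  classical
  have k := key (c := c) hb hd 0
  have hX : (Finset.univ.filter fun i : Fin (b+2*c+d) =>
      ((xsl b c d i : ℝ) / RR b c d) ≤ (0:ℝ)).card = 0 := by
    rw [Finset.card_eq_zero, Finset.filter_eq_empty_iff]
    intro i _
    rw [not_le]
    have h1 : (0:ℝ) < (xsl b c d i : ℝ) := by
      exact_mod_cast xsl_pos i.isLt
    exact div_pos h1 RR_pos
  have hY : (Finset.univ.filter fun i : Fin (b+2*c+d) =>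
      (0:ℝ) ≤ ((ysl b c d i : ℝ) / RR b c d)).card = b+2*c+d := by
    rw [Finset.filter_true_of_mem, Finset.card_univ, Fintype.card_fin]
    intro i _
    exact div_nonneg (Nat.cast_nonneg _) RR_pos.le
  omega

noncomputable def pstar (b c d : ℕ) : ℝ := ((2*(2*(b+c)+d)+1 : ℕ) : ℝ) / (2 * RR b c d)

lemma pstar_mem : pstar b c d ∈ Set.Ico (0:ℝ) 1 := by
  have h1 : (0:ℝ) < 2 * RR b c d := by linarith [RR_pos (b := b) (c := c) (d := d)]
  constructor
  · exact div_nonneg (Nat.cast_nonneg _) h1.le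
  · rw [pstar, div_lt_one h1]
    unfold RR
    push_cast
    nlinarith [Nat.cast_nonneg (α := ℝ) c, Nat.cast_nonneg (α := ℝ) d, Nat.cast_nonneg (α := ℝ) b]

lemma slot_le_pstar (k : ℕ) :
    (k : ℝ) / RR b c d ≤ pstar b c d ↔ 2*k ≤ 2*(2*(b+c)+d)+1 := by
  have h2 : (k : ℝ) / RR b c d = ((2*k : ℕ) : ℝ) / (2 * RR b c d) := by
    push_cast
    rw [mul_div_mul_left _ _ (two_ne_zero)]
  rw [h2]
  exact cast_div_le_iff (by linarith [RR_pos (b := b) (c := c) (d := d)]) _ _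

lemma pstar_le_slot (k : ℕ) :
    pstar b c d ≤ (k : ℝ) / RR b c d ↔ 2*(2*(b+c)+d)+1 ≤ 2*k := by
  have h2 : (k : ℝ) / RR b c d = ((2*k : ℕ) : ℝ) / (2 * RR b c d) := by
    push_cast
    rw [mul_div_mul_left _ _ (two_ne_zero)]
  rw [h2]
  exact cast_div_le_iff (by linarith [RR_pos (b := b) (c := c) (d := d)]) _ _

lemma xsl_pstar_iff (hb : 1 ≤ b) (hd : 1 ≤ d) (hi : i < b+2*c+d) :
    2*(xsl b c d i) ≤ 2*(2*(b+c)+d)+1 ↔ (0 ≤ i ∧ i < b+c) := by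
  unfold xsl; split_ifs <;> omega

lemma ysl_pstar_iff (hb : 1 ≤ b) (hd : 1 ≤ d) (hi : i < b+2*c+d) :
    2*(2*(b+c)+d)+1 ≤ 2*(ysl b c d i) ↔ (b ≤ i ∧ i < b+c) := by
  unfold ysl; split_ifs <;> omega

lemma agree_pstar (hb : 1 ≤ b) (hd : 1 ≤ d) :
    agree (arcs b c d) (pstar b c d) = b+c := by
  classical
  have k := key (c := c) hb hd (pstar b c d)
  have hX : (Finset.univ.filter fun i : Fin (b+2*c+d) =>
      ((xsl b c d i : ℝ) / RR b c d) ≤ pstar b c d).card = b+c := by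
    have heq : (Finset.univ.filter fun i : Fin (b+2*c+d) =>
        ((xsl b c d i : ℝ) / RR b c d) ≤ pstar b c d)
        = (Finset.univ.filter fun i : Fin (b+2*c+d) => 0 ≤ (i:ℕ) ∧ (i:ℕ) < b+c) := by
      apply Finset.filter_congr
      intro i _
      rw [slot_le_pstar, xsl_pstar_iff hb hd i.isLt]
    rw [heq, card_filter_interval _ _ _ (by omega)]
    omega
  have hY : (Finset.univ.filter fun i : Fin (b+2*c+d) =>
      pstar b c d ≤ ((ysl b c d i : ℝ) / RR b c d)).card = c := by
    have heq : (Finset.univ.filter fun i : Fin (b+2*c+d) =>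
        pstar b c d ≤ ((ysl b c d i : ℝ) / RR b c d))
        = (Finset.univ.filter fun i : Fin (b+2*c+d) => b ≤ (i:ℕ) ∧ (i:ℕ) < b+c) := by
      apply Finset.filter_congr
      intro i _
      rw [pstar_le_slot, ysl_pstar_iff hb hd i.isLt]
    rw [heq, card_filter_interval _ _ _ (by omega)]
    omega
  omega

def natMem (b c d i w : ℕ) : Prop :=
  if xsl b c d i ≤ ysl b c d i then xsl b c d i ≤ w ∧ w ≤ ysl b c d i
  else xsl b c d i ≤ w ∨ w ≤ ysl b c d i

lemma mem_of_natMem {w : ℕ} (h : natMem b c d i w) :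
    (arcs b c d ⟨i, hi⟩).Mem ((w : ℝ) / RR b c d) := by
  unfold natMem at h
  show memArc ((xsl b c d i : ℝ) / RR b c d) ((ysl b c d i : ℝ) / RR b c d) _
  unfold memArc
  by_cases hxy : xsl b c d i ≤ ysl b c d i
  · rw [if_pos hxy] at h
    rw [if_pos ((div_le_div_slots _ _).2 hxy)]
    exact ⟨(div_le_div_slots _ _).2 h.1, (div_le_div_slots _ _).2 h.2⟩
  · rw [if_neg hxy] at h
    rw [if_neg (fun hc => hxy ((div_le_div_slots _ _).1 hc))]
    rcases h with h | h
    · exact Or.inl ((div_le_div_slots _ _).2 h)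
    · exact Or.inr ((div_le_div_slots _ _).2 h)

lemma natMem_normal {w : ℕ} (hb : 1 ≤ b) (hd : 1 ≤ d) (hi : i < b+2*c+d)
    (hq : b ≤ i ∧ i < b+c) :
    natMem b c d i w ↔ (xsl b c d i ≤ w ∧ w ≤ ysl b c d i) := by
  unfold natMem; rw [if_pos ((normal_iff hb hd hi).2 hq)]

lemma natMem_wrap {w : ℕ} (hb : 1 ≤ b) (hd : 1 ≤ d) (hi : i < b+2*c+d)
    (hq : ¬ (b ≤ i ∧ i < b+c)) :
    natMem b c d i w ↔ (xsl b c d i ≤ w ∨ w ≤ ysl b c d i) := by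
  unfold natMem; rw [if_neg (fun hc => hq ((normal_iff hb hd hi).1 hc))]

lemma exists_nat_witness (hb : 1 ≤ b) (hd : 1 ≤ d) (hi : i < b+2*c+d) (hj : j < b+2*c+d)
    (hij : i ≠ j) : ∃ w, w ≤ 2*(b+2*c+d) ∧ natMem b c d i w ∧ natMem b c d j w := by
  by_cases Qi : b ≤ i ∧ i < b+c <;> by_cases Qj : b ≤ j ∧ j < b+c
  · refine ⟨2*c+1, by omega, ?_, ?_⟩
    · rw [natMem_normal hb hd hi Qi]; unfold xsl ysl; split_ifs <;> omega
    · rw [natMem_normal hb hd hj Qj]; unfold xsl ysl; split_ifs <;> omega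
  · by_cases h1 : j < b
    · refine ⟨2*c+2*j+2, by omega, ?_, ?_⟩
      · rw [natMem_normal hb hd hi Qi]; unfold xsl ysl; split_ifs <;> omega
      · rw [natMem_wrap hb hd hj Qj]; unfold xsl ysl; split_ifs <;> omega
    by_cases h2 : b+2*c ≤ j
    · refine ⟨2*(i-b)+2, by omega, ?_, ?_⟩
      · rw [natMem_normal hb hd hi Qi]; unfold xsl ysl; split_ifs <;> omega
      · rw [natMem_wrap hb hd hj Qj]; unfold xsl ysl; split_ifs <;> omega
    by_cases h3 : i+c ≤ j
    · refine ⟨2*(i-b)+2, by omega, ?_, ?_⟩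
      · rw [natMem_normal hb hd hi Qi]; unfold xsl ysl; split_ifs <;> omega
      · rw [natMem_wrap hb hd hj Qj]; unfold xsl ysl; split_ifs <;> omega
    · refine ⟨2*(b+c)+2*d+2*(j-(b+c))+2, by omega, ?_, ?_⟩
      · rw [natMem_normal hb hd hi Qi]; unfold xsl ysl; split_ifs <;> omega
      · rw [natMem_wrap hb hd hj Qj]; unfold xsl ysl; split_ifs <;> omega
  · by_cases h1 : i < b
    · refine ⟨2*c+2*i+2, by omega, ?_, ?_⟩
      · rw [natMem_wrap hb hd hi Qi]; unfold xsl ysl; split_ifs <;> omega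
      · rw [natMem_normal hb hd hj Qj]; unfold xsl ysl; split_ifs <;> omega
    by_cases h2 : b+2*c ≤ i
    · refine ⟨2*(j-b)+2, by omega, ?_, ?_⟩
      · rw [natMem_wrap hb hd hi Qi]; unfold xsl ysl; split_ifs <;> omega
      · rw [natMem_normal hb hd hj Qj]; unfold xsl ysl; split_ifs <;> omega
    by_cases h3 : j+c ≤ i
    · refine ⟨2*(j-b)+2, by omega, ?_, ?_⟩
      · rw [natMem_wrap hb hd hi Qi]; unfold xsl ysl; split_ifs <;> omega
      · rw [natMem_normal hb hd hj Qj]; unfold xsl ysl; split_ifs <;> omega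
    · refine ⟨2*(b+c)+2*d+2*(i-(b+c))+2, by omega, ?_, ?_⟩
      · rw [natMem_wrap hb hd hi Qi]; unfold xsl ysl; split_ifs <;> omega
      · rw [natMem_normal hb hd hj Qj]; unfold xsl ysl; split_ifs <;> omega
  · refine ⟨2*(b+2*c+d), by omega, ?_, ?_⟩
    · rw [natMem_wrap hb hd hi Qi]; unfold xsl ysl; split_ifs <;> omega
    · rw [natMem_wrap hb hd hj Qj]; unfold xsl ysl; split_ifs <;> omega

lemma intersects_all (hb : 1 ≤ b) (hd : 1 ≤ d) (i j : Fin (b+2*c+d)) (hij : i ≠ j) :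
    Intersects (arcs b c d i) (arcs b c d j) := by
  obtain ⟨w, hw, h1, h2⟩ := exists_nat_witness hb hd i.isLt j.isLt
    (fun h => hij (Fin.ext h))
  refine ⟨(w : ℝ) / RR b c d, ⟨div_nonneg (Nat.cast_nonneg _) RR_pos.le, ?_⟩, ?_, ?_⟩
  · rw [div_lt_one RR_pos]
    unfold RR
    exact_mod_cast Nat.lt_succ_of_le hw
  · exact mem_of_natMem (hi := i.isLt) h1
  · exact mem_of_natMem (hi := j.isLt) h2

lemma distinct_endpoints (hb : 1 ≤ b) (hd : 1 ≤ d) : DistinctEndpoints (arcs b c d) := by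
  rintro ⟨i, bi⟩ ⟨j, bj⟩ h
  simp only [arcs] at h
  cases bi <;> cases bj <;> simp only [if_true, if_false, Bool.false_eq_true] at h
  · have := ysl_inj hb i.isLt j.isLt ((div_eq_div_slots _ _).1 h)
    rw [Fin.ext this]
  · exact absurd ((div_eq_div_slots _ _).1 h).symm (xsl_ne_ysl j.isLt i.isLt)
  · exact absurd ((div_eq_div_slots _ _).1 h) (xsl_ne_ysl i.isLt j.isLt)
  · have := xsl_inj hb i.isLt j.isLt ((div_eq_div_slots _ _).1 h)
    rw [Fin.ext this]

lemma edge_count (hb : 1 ≤ b) (hd : 1 ≤ d) :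
    edgeCount (arcs b c d) = (b+2*c+d).choose 2 := by
  classical
  unfold edgeCount
  have hfe : (Finset.univ.filter fun q : Fin (b+2*c+d) × Fin (b+2*c+d) =>
      q.1 < q.2 ∧ Intersects (arcs b c d q.1) (arcs b c d q.2))
      = Finset.univ.filter fun q : Fin (b+2*c+d) × Fin (b+2*c+d) => q.1 < q.2 := by
    apply Finset.filter_congr
    intro q _
    exact ⟨fun h => h.1, fun h => ⟨h, intersects_all hb hd _ _ (ne_of_lt h)⟩⟩
  rw [hfe, Finset.card_filter, Fintype.sum_prod_type]
  have hinner : ∀ i : Fin (b+2*c+d),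
      (∑ j : Fin (b+2*c+d), if i < j then (1:ℕ) else 0) = b+2*c+d - ((i:ℕ)+1) := by
    intro i
    rw [← Finset.card_filter]
    have heq : (Finset.univ.filter fun j : Fin (b+2*c+d) => i < j)
        = Finset.univ.filter fun j : Fin (b+2*c+d) =>
            (i:ℕ)+1 ≤ (j:ℕ) ∧ (j:ℕ) < b+2*c+d := by
      apply Finset.filter_congr
      intro j _
      rw [Fin.lt_def]
      exact ⟨fun h => ⟨h, j.isLt⟩, fun h => h.1⟩
    rw [heq, card_filter_interval _ _ _ le_rfl]
  rw [Finset.sum_congr rfl (fun i _ => hinner i),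
    Fin.sum_univ_eq_sum_range (fun k => b+2*c+d - (k+1))]
  have hrefl : ∑ k ∈ Finset.range (b+2*c+d), (b+2*c+d - (k+1))
      = ∑ k ∈ Finset.range (b+2*c+d), k := by
    rw [← Finset.sum_range_reflect (fun j => j) (b+2*c+d)]
    exact Finset.sum_congr rfl fun k hk => by
      have := Finset.mem_range.1 hk; omega
  rw [hrefl]
  have hg := Finset.sum_range_id_mul_two (b+2*c+d)
  have hch := Nat.choose_two_right (b+2*c+d)
  omega

lemma master (n b c d : ℕ) (hb : 1 ≤ b) (hd : 1 ≤ d) (hn : n = b+2*c+d) :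
    ∃ A : Fin n → Arc, (∀ i, (A i).InCircle) ∧ DistinctEndpoints A ∧
      IsMaxAgreement A (b+c+d) ∧ IsMinAgreement A (b+c) ∧
      (∀ i j : Fin n, i ≠ j → Intersects (A i) (A j)) ∧
      edgeCount A = n.choose 2 := by
  subst hn
  refine ⟨arcs b c d, fun i => arcs_inCircle i, distinct_endpoints hb hd,
    ⟨?_, 0, ⟨le_rfl, zero_lt_one⟩, agree_zero hb hd⟩,
    ⟨?_, pstar b c d, pstar_mem, agree_pstar hb hd⟩,
    intersects_all hb hd, edge_count hb hd⟩
  · intro p _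
    have hk := key (c := c) hb hd p
    have hu := bound_upper (c := c) hb hd p
    omega
  · intro p _
    have hk := key (c := c) hb hd p
    have hl := bound_lower (c := c) hb hd p
    omega


end ArcAux

/-- Theorem 5.6: for `0 ≤ m < M ≤ n` with `M + m ≥ n + 1`, there is a family of
`n` circular arcs with maximum agreement number `M` and minimum agreement number
`m` in which every pair of arcs intersects, so the intersection graph is complete
with `C(n,2)` edges. -/
theorem exists_complete_intersection_graph (n M m : ℕ) (hmM : m < M) (hMn : M ≤ n)
    (hsum : n + 1 ≤ M + m) :
    ∃ A : Fin n → Arc, (∀ i, (A i).InCircle) ∧ DistinctEndpoints A ∧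
      IsMaxAgreement A M ∧ IsMinAgreement A m ∧
      (∀ i j : Fin n, i ≠ j → Intersects (A i) (A j)) ∧
      edgeCount A = n.choose 2 := by
  obtain ⟨A, h1, h2, h3, h4, h5, h6⟩ :=
    ArcAux.master n (M+m-n) (n-M) (M-m) (by omega) (by omega) (by omega)
  have hM : (M+m-n)+(n-M)+(M-m) = M := by omega
  have hm : (M+m-n)+(n-M) = m := by omega
  rw [hM] at h3
  rw [hm] at h4
  exact ⟨A, h1, h2, h3, h4, h5, h6⟩
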